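/- (Failure of C¹ without the compatibility condition.) Let f₀ : ℝ² × ℝ² → ℝ be continuously differentiable on (closed unit disk) × ℝ², satisfying the specular boundary condition f₀(x,v) = f₀(x, R_x v) for all |x| = 1 and all v ∈ ℝ². Suppose there exists (x₀,v₀) ∈ γ₋ at which the compatibility condition fails, i.e. ∇_x f₀(x₀,v₀) ≠ ∇_x f₀(x₀, R_{x₀} v₀) R_{x₀} − 2 ∇_v f₀(x₀, R_{x₀} v₀) A_{v₀,x₀}. Define F(t,x,v) := f₀(x − t·v, v) if t ≤ t_b(x,v), and F(t,x,v) := f₀(x_b(x,v) − (t − t_b(x,v))·R_{x_b(x,v)} v, R_{x_b(x,v)} v) if t > t_b(x,v). Then for every t with 0 < t < 2|v₀·x₀|/|v₀|², setting x := x₀ + t·v₀ (which lies in the open unit disk, with t_b(x,v₀) = t and x_b(x,v₀) = x₀), the function F is not differentiable at (t, x, v₀). -/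

import Mathlib

noncomputable section

open Matrix Real Set

/-- The Euclidean plane ℝ². -/
abbrev E : Type := EuclideanSpace ℝ (Fin 2)

/-- Dot product on ℝ². -/
def dot (a b : E) : ℝ := a 0 * b 0 + a 1 * b 1

/-- Build a vector of ℝ² from its components. -/
def toE (f : Fin 2 → ℝ) : E := (WithLp.equiv 2 (Fin 2 → ℝ)).symm f

/-- Tensor (outer) product a⊗b, (a⊗b)_{ij} = aᵢ bⱼ. -/
def outer (a b : E) : Matrix (Fin 2) (Fin 2) ℝ := Matrix.of fun i j => a i * b j

/-- Matrix acting on a column vector. -/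
def mulV (M : Matrix (Fin 2) (Fin 2) ℝ) (v : E) : E := toE fun i => M i 0 * v 0 + M i 1 * v 1

/-- Row vector multiplied by a matrix on the right. -/
def vMulM (w : E) (M : Matrix (Fin 2) (Fin 2) ℝ) : E := toE fun j => w 0 * M 0 j + w 1 * M 1 j

/-- Specular reflection matrix R_n = I - 2 n⊗n. -/
def Rmat (n : E) : Matrix (Fin 2) (Fin 2) ℝ := 1 - (2 : ℝ) • outer n n

/-- The matrix A_{v,n} = ((v·n) I + n⊗v)(I - (v⊗n)/(v·n)). -/
def Amat (v n : E) : Matrix (Fin 2) (Fin 2) ℝ :=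
  (dot v n • (1 : Matrix (Fin 2) (Fin 2) ℝ) + outer n v) *
    (1 - (dot v n)⁻¹ • outer v n)

/-- Counterclockwise rotation by π/2. -/
def Qmat : Matrix (Fin 2) (Fin 2) ℝ := !![0, -1; 1, 0]

/-- Backward exit time from the closed unit disk. -/
def tb (x v : E) : ℝ := sSup {s : ℝ | 0 ≤ s ∧ ‖x - s • v‖ ≤ 1}

/-- Backward exit point from the closed unit disk. -/
def xb (x v : E) : E := x - tb x v • v

/-- The i-th column of a 2×2 matrix, as a vector of ℝ². -/
def colE (M : Matrix (Fin 2) (Fin 2) ℝ) (i : Fin 2) : E := toE fun k => M k i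

/-- A 2×2 matrix as a continuous linear map ℝ² → ℝ². -/
def toCLM (M : Matrix (Fin 2) (Fin 2) ℝ) : E →L[ℝ] E :=
  LinearMap.toContinuousLinearMap (Matrix.toEuclideanLin M)

/-- The phase space (closed unit disk) × ℝ². -/
def S : Set (E × E) := {p : E × E | ‖p.1‖ ≤ 1}

/-- The gradient in x of f₀ within (closed unit disk) × ℝ², as a row vector. -/
def gradx (f : E × E → ℝ) (x v : E) : E :=
  toE fun i => fderivWithin ℝ f S (x, v) (EuclideanSpace.single i 1, 0)

/-- The gradient in v of f₀ within (closed unit disk) × ℝ², as a row vector. -/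
def gradv (f : E × E → ℝ) (x v : E) : E :=
  toE fun i => fderivWithin ℝ f S (x, v) (0, EuclideanSpace.single i 1)

/-- The one-bounce mild solution F(t,x,v). -/
def Ffun (f₀ : E × E → ℝ) (p : ℝ × E × E) : ℝ :=
  if p.1 ≤ tb p.2.1 p.2.2 then f₀ (p.2.1 - p.1 • p.2.2, p.2.2)
  else
    f₀ (xb p.2.1 p.2.2 - (p.1 - tb p.2.1 p.2.2) • mulV (Rmat (xb p.2.1 p.2.2)) p.2.2,
        mulV (Rmat (xb p.2.1 p.2.2)) p.2.2)

section Aux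

lemma toE_apply (f : Fin 2 → ℝ) (i : Fin 2) : toE f i = f i := rfl
lemma add_apply' (a b : E) (i : Fin 2) : (a + b) i = a i + b i := rfl
lemma sub_apply' (a b : E) (i : Fin 2) : (a - b) i = a i - b i := rfl
lemma smul_apply' (c : ℝ) (a : E) (i : Fin 2) : (c • a) i = c * a i := rfl
lemma neg_apply' (a : E) (i : Fin 2) : (-a) i = -(a i) := rfl

lemma normsq (y : E) : ‖y‖^2 = dot y y := by
  rw [EuclideanSpace.norm_eq, Real.sq_sqrt (by positivity)]
  simp [dot, Fin.sum_univ_two, sq_abs]; ring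

lemma norm_le_one_iff' (y : E) : ‖y‖ ≤ 1 ↔ dot y y ≤ 1 := by
  rw [← normsq]
  constructor <;> intro h <;> nlinarith [norm_nonneg y]

lemma norm_lt_one_iff' (y : E) : ‖y‖ < 1 ↔ dot y y < 1 := by
  rw [← normsq]
  constructor <;> intro h <;> nlinarith [norm_nonneg y]

lemma dot_line (y v : E) (s : ℝ) :
    dot (y - s • v) (y - s • v) = dot y y - 2*s*(dot y v) + s^2 * dot v v := by
  simp [dot, sub_apply', smul_apply']; ring

lemma abs_le_sqrtd (b c : ℝ) (hc : 0 ≤ c) : |b| ≤ Real.sqrt (b^2 + c) := by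
  rw [← Real.sqrt_sq_eq_abs]
  exact Real.sqrt_le_sqrt (by nlinarith)

lemma tb_eq (y v : E) (hy : dot y y ≤ 1) (hv : 0 < dot v v) :
    tb y v = (dot y v + Real.sqrt ((dot y v)^2 + dot v v * (1 - dot y y))) / dot v v := by
  set V := dot v v with hV
  set b := dot y v with hb
  set d := b^2 + V * (1 - dot y y) with hd
  have hd0 : 0 ≤ d := by nlinarith
  set r := Real.sqrt d with hr
  have hr2 : r^2 = d := Real.sq_sqrt hd0
  have habs : |b| ≤ r := abs_le_sqrtd b (V*(1-dot y y)) (by nlinarith)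
  have hrb : b ≤ r := le_trans (le_abs_self b) habs
  have hrb' : -r ≤ b := by have := neg_abs_le b; linarith
  have hset : {s : ℝ | 0 ≤ s ∧ ‖y - s • v‖ ≤ 1} = Icc 0 ((b+r)/V) := by
    ext s
    simp only [mem_setOf_eq, mem_Icc, norm_le_one_iff', dot_line]
    constructor
    · rintro ⟨h0, hle⟩
      refine ⟨h0, ?_⟩
      by_contra hgt
      push_neg at hgt
      rw [div_lt_iff₀ hv] at hgt
      nlinarith
    · rintro ⟨h0, hle⟩
      refine ⟨h0, ?_⟩
      rw [le_div_iff₀ hv] at hle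
      have h1 : 0 ≤ s*V - (b - r) := by nlinarith
      have h2 : s*V - (b+r) ≤ 0 := by linarith
      nlinarith [mul_nonpos_of_nonneg_of_nonpos h1 h2]
  rw [tb, hset, csSup_Icc (div_nonneg (by linarith) hv.le)]

lemma tb_ge (y v : E) (hv : 0 < dot v v) (s : ℝ) (h0 : 0 ≤ s) (hs : ‖y - s • v‖ ≤ 1) :
    s ≤ tb y v := by
  have hvn : 0 < ‖v‖ := by
    rcases (norm_nonneg v).lt_or_eq with h | h
    · exact h
    · exfalso; have := normsq v; rw [← h] at this; nlinarith
  apply le_csSup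
  · refine ⟨(‖y‖ + 1)/‖v‖, ?_⟩
    rintro s' ⟨h0', hs'⟩
    rw [le_div_iff₀ hvn]
    have h1 : ‖s' • v‖ - ‖y‖ ≤ ‖y - s' • v‖ := by
      calc ‖s' • v‖ - ‖y‖ ≤ ‖s' • v - y‖ := norm_sub_norm_le _ _
        _ = ‖y - s' • v‖ := norm_sub_rev _ _
    rw [norm_smul] at h1
    simp [abs_of_nonneg h0'] at h1
    linarith
  · exact ⟨h0, hs⟩

end Aux
section Aux2

lemma basis_expand (y : E) :
    y = y 0 • (EuclideanSpace.single 0 (1:ℝ) : E) + y 1 • (EuclideanSpace.single 1 (1:ℝ) : E) := by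
  ext i
  fin_cases i <;>
    simp [add_apply', smul_apply', EuclideanSpace.single_apply]

lemma clm_expand (D : (E × E) →L[ℝ] ℝ) (a b : E) :
    D (a, b) = a 0 * D (EuclideanSpace.single 0 (1:ℝ), 0) + a 1 * D (EuclideanSpace.single 1 (1:ℝ), 0)
      + b 0 * D (0, EuclideanSpace.single 0 (1:ℝ)) + b 1 * D (0, EuclideanSpace.single 1 (1:ℝ)) := by
  have hab : (a, b) = a 0 • ((EuclideanSpace.single 0 (1:ℝ) : E), (0:E))
      + a 1 • ((EuclideanSpace.single 1 (1:ℝ) : E), (0:E))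
      + b 0 • ((0:E), (EuclideanSpace.single 0 (1:ℝ) : E))
      + b 1 • ((0:E), (EuclideanSpace.single 1 (1:ℝ) : E)) := by
    have ha := basis_expand a
    have hb := basis_expand b
    refine Prod.ext ?_ ?_ <;> simp <;> [exact ha; exact hb]
  rw [hab, map_add, map_add, map_add, D.map_smul, D.map_smul, D.map_smul, D.map_smul]
  simp [smul_eq_mul]

lemma halfspace_ext (F G : E →L[ℝ] ℝ) (w : E) (hw : dot w w = 1)
    (h : ∀ y : E, dot w y < 0 → F y = G y) : ∀ y : E, F y = G y := by
  intro y
  set m : ℝ := dot w y + 1 with hm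
  have hdot1 : dot w (y - m • w) < 0 := by
    have : dot w (y - m • w) = dot w y - m * dot w w := by
      simp [dot, sub_apply', smul_apply']; ring
    rw [this, hw, hm]; ring_nf; norm_num
  have hdot2 : dot w (-w) < 0 := by
    have : dot w (-w) = -(dot w w) := by simp [dot, neg_apply']; ring
    rw [this, hw]; norm_num
  have hFw : F w = G w := by
    have e := h _ hdot2
    rw [map_neg, map_neg] at e
    linarith
  have hy : y = (y - m • w) + m • w := by abel
  rw [hy, map_add, map_add, F.map_smul, G.map_smul, h _ hdot1, hFw]

lemma dot_neg_left (a b : E) : dot (-a) b = -(dot a b) := by simp [dot, neg_apply']; ring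

lemma mulV_Rmat (y v : E) : mulV (Rmat y) v = v - (2 * dot y v) • y := by
  ext i
  fin_cases i <;>
    simp [mulV, Rmat, outer, toE_apply, dot, Matrix.one_apply, sub_apply', smul_apply'] <;> ring

lemma dot_comm' (a b : E) : dot a b = dot b a := by rw [dot, dot]; ring

lemma dot_self_pos (w h : E) (hne : dot w h ≠ 0) : 0 < dot h h := by
  have hnn : 0 ≤ dot h h := by rw [dot]; nlinarith [sq_nonneg (h 0), sq_nonneg (h 1)]
  rcases hnn.lt_or_eq with hlt | hzz
  · exact hlt
  · exfalso
    have hz : h 0 * h 0 + h 1 * h 1 = 0 := by have h2 := hzz.symm; rw [dot] at h2; linarith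
    have h00 : h 0 = 0 := by
      have : h 0 * h 0 ≤ 0 := by nlinarith [mul_self_nonneg (h 1)]
      exact mul_self_eq_zero.mp (le_antisymm this (mul_self_nonneg _))
    have h01 : h 1 = 0 := by
      have : h 1 * h 1 ≤ 0 := by nlinarith [mul_self_nonneg (h 0)]
      exact mul_self_eq_zero.mp (le_antisymm this (mul_self_nonneg _))
    rw [dot, h00, h01] at hne; simp at hne

end Aux2
section Aux3

/-- Scalar helper: p(s) = (x+s h)·v. -/
def pf (x h v : E) : ℝ → ℝ := fun s => dot x v + s * dot h v
/-- Scalar helper: n(s) = |x+s h|². -/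
def nf (x h : E) : ℝ → ℝ := fun s => dot x x + (2 * dot x h) * s + dot h h * s^2
/-- Discriminant. -/
def Dqf (x h v : E) : ℝ → ℝ := fun s => (pf x h v s)^2 + dot v v * (1 - nf x h s)
/-- Exit time along the perturbed ray. -/
def phif (x h v : E) : ℝ → ℝ := fun s => (pf x h v s + Real.sqrt (Dqf x h v s)) / dot v v
/-- Exit point. -/
def psif (x h v : E) : ℝ → E := fun s => x + s • h - phif x h v s • v
/-- ψ·v. -/
def kfn (x h v : E) : ℝ → ℝ := fun s => dot (psif x h v s) v
/-- Reflected velocity. -/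
def wfn (x h v : E) : ℝ → E := fun s => v - (2 * kfn x h v s) • psif x h v s
/-- Post-bounce position. -/
def afn (x h v : E) (t : ℝ) : ℝ → E :=
  fun s => psif x h v s - (t - phif x h v s) • wfn x h v s

lemma dot_self_nonneg' (h : E) : 0 ≤ dot h h := by
  rw [dot]; nlinarith [sq_nonneg (h 0), sq_nonneg (h 1)]

lemma dot_add_smul_left (x h v : E) (s : ℝ) : dot (x + s • h) v = pf x h v s := by
  simp [pf, dot, add_apply', smul_apply']; ring

lemma dot_add_smul_self (x h : E) (s : ℝ) : dot (x + s • h) (x + s • h) = nf x h s := by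
  simp [nf, dot, add_apply', smul_apply']; ring

lemma kfn_eq (x h v : E) (s : ℝ) :
    kfn x h v s = pf x h v s - phif x h v s * dot v v := by
  simp [kfn, psif, pf, dot, add_apply', smul_apply', sub_apply']; ring

lemma Dqf_nonneg (x h v : E) (s : ℝ) (hv : 0 ≤ dot v v) (hn : nf x h s ≤ 1) :
    0 ≤ Dqf x h v s := by
  simp only [Dqf]; nlinarith [sq_nonneg (pf x h v s)]

lemma tb_phif (x h v : E) (s : ℝ) (hv : 0 < dot v v)
    (hn : dot (x + s • h) (x + s • h) ≤ 1) : tb (x + s • h) v = phif x h v s := by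
  rw [tb_eq _ _ hn hv, dot_add_smul_left, dot_add_smul_self]
  rfl

lemma psif_sphere (x h v : E) (s : ℝ) (hv : 0 < dot v v)
    (hn : dot (x + s • h) (x + s • h) ≤ 1) :
    dot (psif x h v s) (psif x h v s) = 1 := by
  have hn' : nf x h s ≤ 1 := by rw [← dot_add_smul_self]; exact hn
  have hd0 : 0 ≤ Dqf x h v s := Dqf_nonneg _ _ _ _ hv.le hn'
  have hr2 : Real.sqrt (Dqf x h v s) ^ 2 = Dqf x h v s := Real.sq_sqrt hd0
  have hline : dot (psif x h v s) (psif x h v s)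
      = nf x h s - 2*(phif x h v s)*(pf x h v s) + (phif x h v s)^2 * dot v v :=
    (dot_line (x + s • h) v (phif x h v s)).trans
      (by rw [dot_add_smul_self, dot_add_smul_left])
  set P := pf x h v s with hP
  set r := Real.sqrt (Dqf x h v s) with hr
  have hr2' : r^2 = P^2 + dot v v * (1 - nf x h s) := hr2
  have hphi : phif x h v s = (P + r) / dot v v := rfl
  rw [hline, hphi]
  have hVne : dot v v ≠ 0 := hv.ne'
  field_simp
  linear_combination hr2'

lemma phif_lt (x h v : E) (t s : ℝ) (hv : 0 < dot v v)
    (hn : dot (x + s • h) (x + s • h) ≤ 1) (ht : 0 < t)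
    (hq : 1 < dot (x + s • h - t • v) (x + s • h - t • v)) : phif x h v s < t := by
  have hn' : nf x h s ≤ 1 := by rw [← dot_add_smul_self]; exact hn
  have hd0 : 0 ≤ Dqf x h v s := Dqf_nonneg _ _ _ _ hv.le hn'
  have hr2 : Real.sqrt (Dqf x h v s) ^ 2 = Dqf x h v s := Real.sq_sqrt hd0
  set P := pf x h v s with hP
  set r := Real.sqrt (Dqf x h v s) with hr
  have hrP : P ≤ r := by
    have h1 : |P| ≤ r :=
      (abs_le_sqrtd P (dot v v * (1 - nf x h s)) (by nlinarith) : _)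
    linarith [le_abs_self P]
  have hrnn : 0 ≤ r := Real.sqrt_nonneg _
  have hq' : 1 < nf x h s - 2*t*P + t^2 * dot v v := by
    have e := dot_line (x + s • h) v t
    rw [dot_add_smul_self, dot_add_smul_left] at e
    rw [e] at hq
    exact hq
  have h2 : 0 < (t*dot v v - P + r) * (t*dot v v - P - r) := by
    have hid : (t*dot v v - P + r) * (t*dot v v - P - r)
        = dot v v * (nf x h s - 2*t*P + t^2*dot v v - 1) := by
      have hr2' : r^2 = P^2 + dot v v * (1 - nf x h s) := hr2
      linear_combination -hr2'
    rw [hid]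
    exact mul_pos hv (by linarith)
  have h1 : 0 < t*dot v v - P + r := by nlinarith [mul_pos ht hv]
  have h3 : 0 < t*dot v v - P - r := by
    rcases mul_pos_iff.mp h2 with ⟨_, hh⟩ | ⟨hh, _⟩
    · exact hh
    · linarith
  show (P + r) / dot v v < t
  rw [div_lt_iff₀ hv]
  linarith

lemma af_in_disk (ψ v : E) (u : ℝ) (hψ : dot ψ ψ = 1) (hu : 0 ≤ u)
    (hΦ : 2 * dot ψ v + u * dot v v ≤ 0) :
    dot (ψ - u • (v - (2 * dot ψ v) • ψ)) (ψ - u • (v - (2 * dot ψ v) • ψ)) ≤ 1 := by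
  have key : dot (ψ - u • (v - (2 * dot ψ v) • ψ)) (ψ - u • (v - (2 * dot ψ v) • ψ))
      = dot ψ ψ - 2*u*(dot ψ v - 2*(dot ψ v)*(dot ψ ψ))
        + u^2*(dot v v - 4*(dot ψ v)^2 + 4*(dot ψ v)^2*(dot ψ ψ)) := by
    simp [dot, sub_apply', smul_apply']; ring
  rw [key, hψ]
  nlinarith [mul_nonpos_of_nonneg_of_nonpos hu hΦ]

end Aux3
section Aux4

lemma hasDerivAt_line (x h : E) : HasDerivAt (fun s : ℝ => x + s • h) h 0 := by
  simpa using ((hasDerivAt_id (0:ℝ)).smul_const h).const_add x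

lemma hasDerivAt_pf (x h v : E) : HasDerivAt (pf x h v) (dot h v) 0 := by
  unfold pf
  simpa using ((hasDerivAt_id (0:ℝ)).mul_const (dot h v)).const_add (dot x v)

lemma hasDerivAt_nf (x h : E) : HasDerivAt (nf x h) (2 * dot x h) 0 := by
  unfold nf
  have h1 : HasDerivAt (fun s : ℝ => (2 * dot x h) * s) (2 * dot x h) 0 := by
    simpa using (hasDerivAt_id (0:ℝ)).const_mul (2 * dot x h)
  have h2 : HasDerivAt (fun s : ℝ => dot h h * s^2) 0 0 := by
    simpa using (hasDerivAt_pow 2 (0:ℝ)).const_mul (dot h h)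
  have h3 := (h1.add h2).const_add (dot x x)
  have : HasDerivAt (fun s : ℝ => dot x x + ((2 * dot x h) * s + dot h h * s^2)) (2*dot x h) 0 := by
    simpa using h3
  convert this using 1
  funext s; ring

lemma hasDerivAt_Dqf (x h v : E) :
    HasDerivAt (Dqf x h v) (2*(dot x v)*(dot h v) - dot v v * (2 * dot x h)) 0 := by
  unfold Dqf
  have h1 : HasDerivAt (fun s => (pf x h v s)^2) (2*(dot x v)*(dot h v)) 0 := by
    have := (hasDerivAt_pf x h v).mul (hasDerivAt_pf x h v)
    have hp0 : pf x h v 0 = dot x v := by simp [pf]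
    have e : (fun s => (pf x h v s)^2) = fun s => pf x h v s * pf x h v s := by funext s; ring
    rw [e]; exact this.congr_deriv (by rw [hp0]; ring)
  have h2 : HasDerivAt (fun s => dot v v * (1 - nf x h s)) (dot v v * -(2 * dot x h)) 0 :=
    ((hasDerivAt_nf x h).const_sub 1).const_mul (dot v v)
  have := h1.add h2
  exact this.congr_deriv (by ring)

lemma hasDerivAt_phif (x h v : E) (hD : Dqf x h v 0 ≠ 0) :
    HasDerivAt (phif x h v)
      ((dot h v + (2*(dot x v)*(dot h v) - dot v v * (2 * dot x h))
          / (2 * Real.sqrt (Dqf x h v 0))) / dot v v) 0 := by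
  unfold phif
  exact ((hasDerivAt_pf x h v).add ((hasDerivAt_Dqf x h v).sqrt hD)).div_const _

lemma hasDerivAt_psif (x h v : E) (m : ℝ) (hφ : HasDerivAt (phif x h v) m 0) :
    HasDerivAt (psif x h v) (h - m • v) 0 := by
  unfold psif
  exact (hasDerivAt_line x h).sub (hφ.smul_const v)

lemma hasDerivAt_comp_proj (f : ℝ → E) (u : E) (i : Fin 2) (hf : HasDerivAt f u 0) :
    HasDerivAt (fun s => f s i) (u i) 0 := by
  have := (EuclideanSpace.proj (𝕜 := ℝ) i).hasFDerivAt.comp_hasDerivAt 0 hf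
  exact this

lemma hasDerivAt_kfn (x h v : E) (u : E) (hψ : HasDerivAt (psif x h v) u 0) :
    HasDerivAt (kfn x h v) (dot u v) 0 := by
  have h0 := hasDerivAt_comp_proj _ _ 0 hψ
  have h1 := hasDerivAt_comp_proj _ _ 1 hψ
  exact (h0.mul_const (v 0)).add (h1.mul_const (v 1))

lemma hasDerivAt_wfn (x h v : E) (u : E) (hψ : HasDerivAt (psif x h v) u 0) :
    HasDerivAt (wfn x h v)
      (-((2 * kfn x h v 0) • u + (2 * dot u v) • psif x h v 0)) 0 := by
  unfold wfn
  have hk := hasDerivAt_kfn x h v u hψ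
  have h1 : HasDerivAt (fun s => (2 * kfn x h v s) • psif x h v s)
      ((2 * kfn x h v 0) • u + (2 * dot u v) • psif x h v 0) 0 := by
    exact (hk.const_mul 2).smul hψ
  simpa using h1.const_sub v

lemma hasDerivAt_afn (x h v : E) (t m : ℝ) (u u' : E)
    (hφ : HasDerivAt (phif x h v) m 0)
    (hψ : HasDerivAt (psif x h v) u 0)
    (hw : HasDerivAt (wfn x h v) u' 0) :
    HasDerivAt (afn x h v t)
      (u - ((t - phif x h v 0) • u' + (-m) • wfn x h v 0)) 0 := by
  unfold afn
  exact hψ.sub ((hφ.const_sub t).smul hw)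

lemma aval (x₀ v₀ h : E) (hc : dot v₀ x₀ ≠ 0) :
    h - (dot x₀ h / dot v₀ x₀) • v₀
      + (dot x₀ h / dot v₀ x₀) • (v₀ - (2 * dot x₀ v₀) • x₀) = mulV (Rmat x₀) h := by
  rw [dot] at hc
  have hc' : x₀ 0 * v₀ 0 + x₀ 1 * v₀ 1 ≠ 0 := by rwa [mul_comm (x₀ 0), mul_comm (x₀ 1)]
  ext i
  fin_cases i <;>
  · simp [mulV, Rmat, outer, toE_apply, Matrix.one_apply, dot, add_apply', sub_apply',
      smul_apply']
    field_simp [hc, hc']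
    ring
lemma wval (x₀ v₀ h : E) (hc : dot v₀ x₀ ≠ 0) :
    -((2 * dot x₀ v₀) • (h - (dot x₀ h / dot v₀ x₀) • v₀)
        + (2 * dot (h - (dot x₀ h / dot v₀ x₀) • v₀) v₀) • x₀)
      = (-2:ℝ) • mulV (Amat v₀ x₀) h := by
  ext i
  fin_cases i <;>
  · simp [mulV, Amat, outer, toE_apply, Matrix.mul_apply, Fin.sum_univ_two,
      Matrix.one_apply, dot, add_apply', sub_apply', smul_apply', neg_apply']
    field_simp
    ring

end Aux4
set_option maxHeartbeats 2000000 in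
/-- failure of the compatibility condition at a point of γ₋ forces
    non-differentiability of the mild solution at the bounce. -/
theorem stmt19 (f₀ : E × E → ℝ)
    (hf : ContDiffOn ℝ 1 f₀ S)
    (hbc : ∀ x v : E, ‖x‖ = 1 → f₀ (x, v) = f₀ (x, mulV (Rmat x) v))
    (x₀ v₀ : E) (hx₀ : ‖x₀‖ = 1) (hv₀ : dot v₀ x₀ < 0)
    (hfail : gradx f₀ x₀ v₀ ≠
      vMulM (gradx f₀ x₀ (mulV (Rmat x₀) v₀)) (Rmat x₀) -
        (2 : ℝ) • vMulM (gradv f₀ x₀ (mulV (Rmat x₀) v₀)) (Amat v₀ x₀)) :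
    ∀ t : ℝ, 0 < t → t < 2 * |dot v₀ x₀| / ‖v₀‖ ^ 2 →
      ‖x₀ + t • v₀‖ < 1 ∧ tb (x₀ + t • v₀) v₀ = t ∧ xb (x₀ + t • v₀) v₀ = x₀ ∧
      ¬DifferentiableAt ℝ (Ffun f₀) (t, x₀ + t • v₀, v₀) := by
  intro t ht htlt
  set c : ℝ := dot v₀ x₀ with hc
  set V : ℝ := dot v₀ v₀ with hVdef
  have hVnn : 0 ≤ V := by
    rw [hVdef, dot]; nlinarith [sq_nonneg (v₀ 0), sq_nonneg (v₀ 1)]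
  have hV : 0 < V := by
    rcases hVnn.lt_or_eq with h | h
    · exact h
    · exfalso
      have hz : v₀ 0 * v₀ 0 + v₀ 1 * v₀ 1 = 0 := by
        have h2 := h.symm; rw [hVdef, dot] at h2; linarith
      have h00 : v₀ 0 = 0 := by
        have : v₀ 0 * v₀ 0 ≤ 0 := by nlinarith [mul_self_nonneg (v₀ 1)]
        exact mul_self_eq_zero.mp (le_antisymm this (mul_self_nonneg _))
      have h01 : v₀ 1 = 0 := by
        have : v₀ 1 * v₀ 1 ≤ 0 := by nlinarith [mul_self_nonneg (v₀ 0)]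
        exact mul_self_eq_zero.mp (le_antisymm this (mul_self_nonneg _))
      rw [hc, dot, h00, h01] at hv₀; simp at hv₀
  have hx1 : dot x₀ x₀ = 1 := by
    have h := normsq x₀; rw [hx₀] at h; simpa using h.symm
  have htV : t * V < -(2*c) := by
    rw [abs_of_neg hv₀, normsq, ← hVdef, lt_div_iff₀ hV] at htlt
    linarith
  set x : E := x₀ + t • v₀ with hxdef
  have hdotxx : dot x x = 1 + 2*t*c + t^2*V := by
    rw [hxdef, hc, hVdef]; simp [dot, add_apply', smul_apply', hx1.symm]
    have := hx1; rw [dot] at this; nlinarith [this]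
  have hdotxv : dot x v₀ = c + t*V := by
    rw [hxdef, hc, hVdef]; simp [dot, add_apply', smul_apply']; ring
  have part1 : ‖x‖ < 1 := by
    rw [norm_lt_one_iff', hdotxx]; nlinarith
  have hxle : dot x x ≤ 1 := by rw [hdotxx]; nlinarith
  have part2 : tb x v₀ = t := by
    rw [tb_eq x v₀ hxle hV, ← hVdef, hdotxv, hdotxx]
    have hd : (c + t*V)^2 + V * (1 - (1 + 2*t*c + t^2*V)) = c^2 := by ring
    rw [hd, Real.sqrt_sq_eq_abs, abs_of_neg hv₀]
    field_simp
    ring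
  have part3 : xb x v₀ = x₀ := by
    rw [xb, part2, hxdef, add_sub_cancel_right]
  refine ⟨part1, part2, part3, ?_⟩
  intro hd
  have hL := hd.hasFDerivAt
  set L := fderiv ℝ (Ffun f₀) (t, x, v₀) with hLdef
  set Rv : E := mulV (Rmat x₀) v₀ with hRvdef
  have hx₀S : ((x₀, v₀) : E × E) ∈ S := by simp only [S, mem_setOf_eq]; rw [hx₀]
  have hx₀S2 : ((x₀, Rv) : E × E) ∈ S := by simp only [S, mem_setOf_eq]; rw [hx₀]
  set D₁ := fderivWithin ℝ f₀ S (x₀, v₀) with hD₁def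
  set D₂ := fderivWithin ℝ f₀ S (x₀, Rv) with hD₂def
  have hfd₁ : HasFDerivWithinAt f₀ D₁ S (x₀, v₀) :=
    ((hf.differentiableOn one_ne_zero) _ hx₀S).hasFDerivWithinAt
  have hfd₂ : HasFDerivWithinAt f₀ D₂ S (x₀, Rv) :=
    ((hf.differentiableOn one_ne_zero) _ hx₀S2).hasFDerivWithinAt
  have side1 : ∀ h : E, dot x₀ h < 0 → L ((0:ℝ), h, (0:E)) = D₁ (h, (0:E)) := by
    intro h hh
    have hhh : 0 < dot h h := dot_self_pos x₀ h hh.ne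
    set δ : ℝ := -(dot x₀ h) / dot h h with hδ
    have hδpos : 0 < δ := div_pos (by linarith) hhh
    have hγ : HasDerivAt (fun s : ℝ => ((t, x + s • h, v₀) : ℝ × E × E)) ((0:ℝ), h, (0:E)) 0 := by
      apply (hasDerivAt_const (0:ℝ) t).prodMk
      apply HasDerivAt.prodMk _ (hasDerivAt_const (0:ℝ) v₀)
      simpa using ((hasDerivAt_id (0:ℝ)).smul_const h).const_add x
    have hL' : HasFDerivAt (Ffun f₀) L ((fun s : ℝ => ((t, x + s • h, v₀) : ℝ × E × E)) 0) := by
      simpa using hL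
    have hg : HasDerivAt (fun s : ℝ => Ffun f₀ (t, x + s • h, v₀)) (L ((0:ℝ), h, (0:E))) 0 :=
      by have := hL'.comp_hasDerivAt 0 hγ; exact this
    have hmem : ∀ s ∈ Icc (0:ℝ) δ, dot (x₀ + s • h) (x₀ + s • h) ≤ 1 := by
      rintro s ⟨h0, h1⟩
      have hsd : s * dot h h ≤ -(dot x₀ h) := by
        rw [hδ, le_div_iff₀ hhh] at h1; linarith
      have expand : dot (x₀ + s • h) (x₀ + s • h) = 1 + 2*s*(dot x₀ h) + s^2*(dot h h) := by
        have e := hx1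
        rw [dot] at e
        simp only [dot, add_apply', smul_apply']
        linear_combination e
      rw [expand]; nlinarith
    have heq : ∀ s ∈ Icc (0:ℝ) δ, Ffun f₀ (t, x + s • h, v₀) = f₀ (x₀ + s • h, v₀) := by
      rintro s hs
      have hxx : x + s • h - t • v₀ = x₀ + s • h := by rw [hxdef]; abel
      have hle : t ≤ tb (x + s • h) v₀ := by
        apply tb_ge _ _ hV t ht.le
        rw [hxx, norm_le_one_iff']
        exact hmem s hs
      show (if t ≤ tb (x + s • h) v₀ then f₀ (x + s • h - t • v₀, v₀) else _) = _
      rw [if_pos hle, hxx]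
    have hc₁ : HasDerivAt (fun s : ℝ => ((x₀ + s • h, v₀) : E × E)) ((h, (0:E))) 0 := by
      apply HasDerivAt.prodMk _ (hasDerivAt_const (0:ℝ) v₀)
      simpa using ((hasDerivAt_id (0:ℝ)).smul_const h).const_add x₀
    have hmaps : MapsTo (fun s : ℝ => ((x₀ + s • h, v₀) : E × E)) (Icc 0 δ) S := by
      intro s hs
      simp only [S, mem_setOf_eq, norm_le_one_iff']
      exact hmem s hs
    have hfd₁' : HasFDerivWithinAt f₀ D₁ S ((fun s : ℝ => ((x₀ + s • h, v₀) : E × E)) 0) := by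
      simpa using hfd₁
    have hcomp : HasDerivWithinAt (fun s : ℝ => f₀ (x₀ + s • h, v₀)) (D₁ (h, (0:E))) (Icc 0 δ) 0 :=
      hfd₁'.comp_hasDerivWithinAt 0 hc₁.hasDerivWithinAt hmaps
    have hg' : HasDerivWithinAt (fun s : ℝ => Ffun f₀ (t, x + s • h, v₀)) (D₁ (h, (0:E)))
        (Icc 0 δ) 0 :=
      hcomp.congr heq (heq 0 (left_mem_Icc.mpr hδpos.le))
    have hu : UniqueDiffWithinAt ℝ (Icc (0:ℝ) δ) 0 :=
      uniqueDiffOn_Icc hδpos 0 (left_mem_Icc.mpr hδpos.le)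
    have e1 := (hg.hasDerivWithinAt (s := Icc (0:ℝ) δ)).derivWithin hu
    have e2 := hg'.derivWithin hu
    exact e1.symm.trans e2
  have side2 : ∀ h : E, 0 < dot x₀ h →
      L ((0:ℝ), h, (0:E)) = D₂ (mulV (Rmat x₀) h, (-2:ℝ) • mulV (Amat v₀ x₀) h) := by
    intro h hh
    have hV' : 0 < dot v₀ v₀ := by rw [← hVdef]; exact hV
    have hcne : dot v₀ x₀ ≠ 0 := by rw [← hc]; exact hv₀.ne
    set m : ℝ := dot x₀ h / c with hm
    have hp0 : pf x h v₀ 0 = dot x v₀ := by simp [pf]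
    have hn0 : nf x h 0 = dot x x := by simp [nf]
    have hDq0 : Dqf x h v₀ 0 = c^2 := by
      show (pf x h v₀ 0)^2 + dot v₀ v₀ * (1 - nf x h 0) = c^2
      rw [hp0, hn0, hdotxv, hdotxx, ← hVdef]; ring
    have hsq0 : Real.sqrt (Dqf x h v₀ 0) = -c := by
      rw [hDq0, Real.sqrt_sq_eq_abs, abs_of_neg hv₀]
    have hDqne : Dqf x h v₀ 0 ≠ 0 := by rw [hDq0]; exact pow_ne_zero 2 hv₀.ne
    have hφ0 : phif x h v₀ 0 = t := by
      show (pf x h v₀ 0 + Real.sqrt (Dqf x h v₀ 0)) / dot v₀ v₀ = t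
      rw [hp0, hsq0, hdotxv, ← hVdef]
      field_simp
      ring
    have hψ0 : psif x h v₀ 0 = x₀ := by
      show x + (0:ℝ) • h - phif x h v₀ 0 • v₀ = x₀
      rw [hφ0, zero_smul, add_zero, hxdef, add_sub_cancel_right]
    have hk0 : kfn x h v₀ 0 = dot x₀ v₀ := by
      show dot (psif x h v₀ 0) v₀ = dot x₀ v₀
      rw [hψ0]
    have hw0 : wfn x h v₀ 0 = v₀ - (2 * dot x₀ v₀) • x₀ := by
      show v₀ - (2 * kfn x h v₀ 0) • psif x h v₀ 0 = _
      rw [hk0, hψ0]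
    have hdxh : dot x h = dot x₀ h + t * dot h v₀ := by
      rw [hxdef]; simp [dot, add_apply', smul_apply']; ring
    have hφd : HasDerivAt (phif x h v₀) m 0 := by
      have h0 := hasDerivAt_phif x h v₀ hDqne
      convert h0 using 1
      rw [hsq0, hdotxv, hdxh, ← hVdef, hm]
      field_simp [hv₀.ne, hV.ne']
      ring
    have hψd : HasDerivAt (psif x h v₀) (h - m • v₀) 0 := hasDerivAt_psif _ _ _ m hφd
    have hwd : HasDerivAt (wfn x h v₀) ((-2:ℝ) • mulV (Amat v₀ x₀) h) 0 := by
      have h0 := hasDerivAt_wfn x h v₀ (h - m • v₀) hψd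
      rw [hk0, hψ0] at h0
      convert h0 using 1
      rw [← wval x₀ v₀ h hcne, hm, hc]
    have had : HasDerivAt (afn x h v₀ t) (mulV (Rmat x₀) h) 0 := by
      have h0 := hasDerivAt_afn x h v₀ t m (h - m • v₀) _ hφd hψd hwd
      rw [hφ0, sub_self, hw0, zero_smul, zero_add] at h0
      convert h0 using 1
      rw [← aval x₀ v₀ h hcne, hm, hc, neg_smul, sub_neg_eq_add]
    have hpcont : Continuous (pf x h v₀) := by unfold pf; continuity
    have hncont : Continuous (nf x h) := by unfold nf; continuity
    have hDqcont : Continuous (Dqf x h v₀) := by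
      unfold Dqf
      exact (hpcont.pow 2).add (continuous_const.mul (continuous_const.sub hncont))
    have hφcont : Continuous (phif x h v₀) := by
      unfold phif
      exact (hpcont.add (Real.continuous_sqrt.comp hDqcont)).div_const _
    have hΦcont : Continuous (fun s =>
        2*(pf x h v₀ s - phif x h v₀ s * V) + (t - phif x h v₀ s)*V) :=
      (continuous_const.mul (hpcont.sub (hφcont.mul continuous_const))).add
        ((continuous_const.sub hφcont).mul continuous_const)
    have hOopen : IsOpen {s : ℝ | nf x h s < 1 ∧
        2*(pf x h v₀ s - phif x h v₀ s * V) + (t - phif x h v₀ s)*V < 0} := by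
      rw [setOf_and]
      exact (isOpen_lt hncont continuous_const).inter (isOpen_lt hΦcont continuous_const)
    have h0O : (0:ℝ) ∈ {s : ℝ | nf x h s < 1 ∧
        2*(pf x h v₀ s - phif x h v₀ s * V) + (t - phif x h v₀ s)*V < 0} := by
      constructor
      · show nf x h 0 < 1
        rw [hn0]
        exact (norm_lt_one_iff' x).mp part1
      · show 2*(pf x h v₀ 0 - phif x h v₀ 0 * V) + (t - phif x h v₀ 0)*V < 0
        rw [hp0, hφ0, hdotxv]
        have he : 2*((c + t*V) - t*V) + (t - t)*V = 2*c := by ring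
        rw [he]; linarith
    obtain ⟨ε, hεpos, hball⟩ := Metric.isOpen_iff.mp hOopen 0 h0O
    set δ : ℝ := ε/2 with hδdef
    have hδpos : 0 < δ := by rw [hδdef]; positivity
    have hsubO : ∀ s ∈ Icc (0:ℝ) δ, nf x h s < 1 ∧
        2*(pf x h v₀ s - phif x h v₀ s * V) + (t - phif x h v₀ s)*V < 0 := by
      intro s hs
      apply hball
      rw [Metric.mem_ball, Real.dist_eq, sub_zero, abs_of_nonneg hs.1]
      have h2 := hs.2
      rw [hδdef] at h2
      linarith
    have hcond1 : ∀ s ∈ Icc (0:ℝ) δ, dot (x + s • h) (x + s • h) ≤ 1 := by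
      intro s hs; rw [dot_add_smul_self]; exact (hsubO s hs).1.le
    have hcond2 : ∀ s ∈ Icc (0:ℝ) δ,
        2 * kfn x h v₀ s + (t - phif x h v₀ s) * dot v₀ v₀ ≤ 0 := by
      intro s hs
      rw [kfn_eq, ← hVdef]
      have h2 := (hsubO s hs).2
      linarith
    have hxx2 : ∀ s : ℝ, x + s • h - t • v₀ = x₀ + s • h := by
      intro s; rw [hxdef]; abel
    have hφlt : ∀ s ∈ Icc (0:ℝ) δ, 0 < s → phif x h v₀ s < t := by
      intro s hs hspos
      apply phif_lt x h v₀ t s hV' (hcond1 s hs) ht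
      rw [hxx2 s, dot_add_smul_self]
      show 1 < nf x₀ h s
      have he : nf x₀ h s = dot x₀ x₀ + (2*dot x₀ h)*s + dot h h*s^2 := rfl
      rw [he, hx1]
      nlinarith [dot_self_nonneg' h]
    have hφle : ∀ s ∈ Icc (0:ℝ) δ, phif x h v₀ s ≤ t := by
      intro s hs
      rcases eq_or_lt_of_le hs.1 with he | hlt
      · rw [← he, hφ0]
      · exact (hφlt s hs hlt).le
    have htbs : ∀ s ∈ Icc (0:ℝ) δ, tb (x + s • h) v₀ = phif x h v₀ s :=
      fun s hs => tb_phif x h v₀ s hV' (hcond1 s hs)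
    have heq2 : ∀ s ∈ Icc (0:ℝ) δ,
        Ffun f₀ (t, x + s • h, v₀) = f₀ (afn x h v₀ t s, wfn x h v₀ s) := by
      intro s hs
      rcases eq_or_lt_of_le hs.1 with he | hspos
      · rw [← he]
        show (if t ≤ tb (x + (0:ℝ) • h) v₀ then f₀ (x + (0:ℝ) • h - t • v₀, v₀) else _) = _
        rw [zero_smul, add_zero, if_pos (le_of_eq part2.symm)]
        have hx0' : x - t • v₀ = x₀ := by rw [hxdef, add_sub_cancel_right]
        have ha0 : afn x h v₀ t 0 = x₀ := by
          show psif x h v₀ 0 - (t - phif x h v₀ 0) • wfn x h v₀ 0 = x₀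
          rw [hψ0, hφ0, sub_self, zero_smul, sub_zero]
        rw [hx0', ha0, hw0, hbc x₀ v₀ hx₀, mulV_Rmat]
      · have htb := htbs s hs
        have hlt := hφlt s hs hspos
        show (if t ≤ tb (x + s • h) v₀ then _
          else f₀ (xb (x + s • h) v₀ - (t - tb (x + s • h) v₀) •
              mulV (Rmat (xb (x + s • h) v₀)) v₀, mulV (Rmat (xb (x + s • h) v₀)) v₀)) = _
        rw [if_neg (by rw [htb]; exact not_le.mpr hlt)]
        have hxb2 : xb (x + s • h) v₀ = psif x h v₀ s := by rw [xb, htb]; rfl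
        rw [hxb2, htb, mulV_Rmat]
        rfl
    have hmapsΓ : MapsTo (fun s : ℝ => ((afn x h v₀ t s, wfn x h v₀ s) : E × E))
        (Icc 0 δ) S := by
      intro s hs
      show ‖afn x h v₀ t s‖ ≤ 1
      rw [norm_le_one_iff']
      have hψ1 := psif_sphere x h v₀ s hV' (hcond1 s hs)
      have hu : 0 ≤ t - phif x h v₀ s := by linarith [hφle s hs]
      exact af_in_disk (psif x h v₀ s) v₀ (t - phif x h v₀ s) hψ1 hu (hcond2 s hs)
    have hΓd : HasDerivAt (fun s : ℝ => ((afn x h v₀ t s, wfn x h v₀ s) : E × E))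
        ((mulV (Rmat x₀) h, (-2:ℝ) • mulV (Amat v₀ x₀) h)) 0 := had.prodMk hwd
    have hΓ0 : ((afn x h v₀ t 0, wfn x h v₀ 0) : E × E) = (x₀, Rv) := by
      have ha0 : afn x h v₀ t 0 = x₀ := by
        show psif x h v₀ 0 - (t - phif x h v₀ 0) • wfn x h v₀ 0 = x₀
        rw [hψ0, hφ0, sub_self, zero_smul, sub_zero]
      rw [ha0, hw0, hRvdef, mulV_Rmat]
    have hfd₂' : HasFDerivWithinAt f₀ D₂ S (afn x h v₀ t 0, wfn x h v₀ 0) := by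
      rw [hΓ0]; exact hfd₂
    have hcomp : HasDerivWithinAt (fun s : ℝ => f₀ (afn x h v₀ t s, wfn x h v₀ s))
        (D₂ (mulV (Rmat x₀) h, (-2:ℝ) • mulV (Amat v₀ x₀) h)) (Icc 0 δ) 0 :=
      hfd₂'.comp_hasDerivWithinAt 0 hΓd.hasDerivWithinAt hmapsΓ
    have hγ : HasDerivAt (fun s : ℝ => ((t, x + s • h, v₀) : ℝ × E × E)) ((0:ℝ), h, (0:E)) 0 :=
      (hasDerivAt_const (0:ℝ) t).prodMk ((hasDerivAt_line x h).prodMk (hasDerivAt_const (0:ℝ) v₀))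
    have hL' : HasFDerivAt (Ffun f₀) L ((fun s : ℝ => ((t, x + s • h, v₀) : ℝ × E × E)) 0) := by
      simpa using hL
    have hg : HasDerivAt (fun s : ℝ => Ffun f₀ (t, x + s • h, v₀)) (L ((0:ℝ), h, (0:E))) 0 :=
      by have := hL'.comp_hasDerivAt 0 hγ; exact this
    have hg' : HasDerivWithinAt (fun s : ℝ => Ffun f₀ (t, x + s • h, v₀))
        (D₂ (mulV (Rmat x₀) h, (-2:ℝ) • mulV (Amat v₀ x₀) h)) (Icc 0 δ) 0 :=
      hcomp.congr heq2 (heq2 0 (left_mem_Icc.mpr hδpos.le))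
    have hu2 : UniqueDiffWithinAt ℝ (Icc (0:ℝ) δ) 0 :=
      uniqueDiffOn_Icc hδpos 0 (left_mem_Icc.mpr hδpos.le)
    exact ((hg.hasDerivWithinAt (s := Icc (0:ℝ) δ)).derivWithin hu2).symm.trans
      (hg'.derivWithin hu2)
  -- assembly
  have toCLM_apply : ∀ (M : Matrix (Fin 2) (Fin 2) ℝ) (v : E), toCLM M v = mulV M v := by
    intro M v
    ext i
    fin_cases i <;>
      simp [toCLM, mulV, toE_apply, Matrix.toEuclideanLin, Matrix.toLin'_apply,
        Matrix.mulVec, dotProduct, Fin.sum_univ_two] <;> ring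
  set J : E →L[ℝ] ℝ × E × E :=
    ContinuousLinearMap.prod 0 ((ContinuousLinearMap.id ℝ E).prod 0) with hJ
  have hJapp : ∀ h : E, J h = ((0:ℝ), h, (0:E)) := fun h => rfl
  set G₁ : E →L[ℝ] ℝ := D₁.comp ((ContinuousLinearMap.id ℝ E).prod 0) with hG₁
  set G₂ : E →L[ℝ] ℝ :=
    D₂.comp ((toCLM (Rmat x₀)).prod ((-2:ℝ) • toCLM (Amat v₀ x₀))) with hG₂
  have hall1 : ∀ y : E, (L.comp J) y = G₁ y := by
    apply halfspace_ext _ _ x₀ hx1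
    intro y hy
    have := side1 y hy
    simpa [hJapp, hG₁] using this
  have hall2 : ∀ y : E, (L.comp J) y = G₂ y := by
    have := halfspace_ext (L.comp J) G₂ (-x₀) ?_ ?_
    · exact this
    · have : dot (-x₀) (-x₀) = dot x₀ x₀ := by simp [dot, neg_apply']
      rw [this, hx1]
    · intro y hy
      rw [dot_neg_left] at hy
      have hy' : 0 < dot x₀ y := by linarith
      have := side2 y hy'
      simp only [ContinuousLinearMap.comp_apply, hJapp, hG₂,
        ContinuousLinearMap.prod_apply, ContinuousLinearMap.smul_apply, toCLM_apply]
      exact this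
  have hall : ∀ y : E, G₁ y = G₂ y := fun y => (hall1 y).symm.trans (hall2 y)
  apply hfail
  ext i
  have hi := hall (EuclideanSpace.single i (1:ℝ))
  have hG₁i : G₁ (EuclideanSpace.single i (1:ℝ)) = gradx f₀ x₀ v₀ i := by
    simp only [hG₁, ContinuousLinearMap.comp_apply, ContinuousLinearMap.prod_apply,
      ContinuousLinearMap.id_apply, ContinuousLinearMap.zero_apply]
    rw [gradx, toE_apply, hD₁def]
  rw [← hG₁i, hi]
  simp only [hG₂, ContinuousLinearMap.comp_apply, ContinuousLinearMap.prod_apply,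
    ContinuousLinearMap.smul_apply, toCLM_apply]
  rw [clm_expand]
  have hgx : ∀ j : Fin 2, D₂ (EuclideanSpace.single j (1:ℝ), 0) = gradx f₀ x₀ Rv j := by
    intro j; rw [gradx, toE_apply, hD₂def]
  have hgv : ∀ j : Fin 2, D₂ (0, EuclideanSpace.single j (1:ℝ)) = gradv f₀ x₀ Rv j := by
    intro j; rw [gradv, toE_apply, hD₂def]
  rw [hgx 0, hgx 1, hgv 0, hgv 1]
  simp only [sub_apply', smul_apply', vMulM, toE_apply, mulV, smul_apply']
  fin_cases i <;>
    simp [EuclideanSpace.single_apply] <;> ring
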